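/- Let H be a real Hilbert space, I = {1,...,n}, μ > 0, and for each i ∈ I let λ_i > 0 with Σ_{i∈I} λ_i = 1 and let A_i : H ⇉ H be maximally monotone. If there exists i₀ ∈ I such that A_{i₀} is strictly monotone, then R_μ(A, λ) is strictly monotone. -/
import Mathlib


open RealInnerProductSpace

namespace SVP

variable {H : Type*} [NormedAddCommGroup H] [InnerProductSpace ℝ H]

/-- Inverse of a set-valued mapping: `x ∈ inv A u ↔ u ∈ A x`. -/
def inv (A : H → Set H) : H → Set H := fun u => {x | u ∈ A x}

/-- Pointwise (Minkowski) sum of two set-valued mappings. -/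
def add (A B : H → Set H) : H → Set H := fun x => {w | ∃ u ∈ A x, ∃ v ∈ B x, w = u + v}

/-- Pointwise difference of two set-valued mappings. -/
def sub (A B : H → Set H) : H → Set H := fun x => {w | ∃ u ∈ A x, ∃ v ∈ B x, w = u - v}

/-- Pointwise scalar multiple of a set-valued mapping. -/
def smul (c : ℝ) (A : H → Set H) : H → Set H := fun x => (fun u => c • u) '' A x

/-- The identity as a set-valued mapping. -/
def id' : H → Set H := fun x => {x}

/-- Composition of set-valued mappings: `(comp A B) x = ⋃ y ∈ B x, A y`. -/
def comp (A B : H → Set H) : H → Set H := fun x => ⋃ y ∈ B x, A y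

/-- Weighted pointwise (Minkowski) combination `Σ_i lam i • (B i)`. -/
def lcomb {n : ℕ} (lam : Fin n → ℝ) (B : Fin n → H → Set H) : H → Set H :=
  fun x => {u | ∃ v : Fin n → H, (∀ i, v i ∈ B i x) ∧ u = ∑ i, lam i • v i}

/-- The `λ`-weighted resolvent average with parameter `μ`:
`R_μ(A, λ) = (Σ_i λ_i (A_i + μ⁻¹ Id)⁻¹)⁻¹ − μ⁻¹ Id`. -/
def resAvg {n : ℕ} (μ : ℝ) (lam : Fin n → ℝ) (A : Fin n → H → Set H) : H → Set H :=
  sub (inv (lcomb lam (fun i => inv (add (A i) (smul μ⁻¹ id'))))) (smul μ⁻¹ id')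

/-- Monotonicity of a set-valued mapping. -/
def IsMonotone (A : H → Set H) : Prop :=
  ∀ ⦃x y u v : H⦄, u ∈ A x → v ∈ A y → 0 ≤ ⟪x - y, u - v⟫

/-- Maximal monotonicity: the graph is not properly contained in the graph of
another monotone mapping. -/
def IsMaxMonotone (A : H → Set H) : Prop :=
  IsMonotone A ∧ ∀ B : H → Set H, IsMonotone B → (∀ x, A x ⊆ B x) → ∀ x, B x ⊆ A x

/-- Domain of a set-valued mapping. -/
def dom (A : H → Set H) : Set H := {x | (A x).Nonempty}

/-- Range of a set-valued mapping. -/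
def ran (A : H → Set H) : Set H := {u | ∃ x, u ∈ A x}

/-- Graph of a set-valued mapping. -/
def graph (A : H → Set H) : Set (H × H) := {p | p.2 ∈ A p.1}

end SVP

variable {H : Type*} [NormedAddCommGroup H] [InnerProductSpace ℝ H] [CompleteSpace H]

/-- A set-valued mapping is strictly monotone if
`⟪x − y, u − v⟫ > 0` whenever `u ∈ A x`, `v ∈ A y` and `x ≠ y`. -/
def IsStrictlyMonotone (A : H → Set H) : Prop :=
  ∀ ⦃x y u v : H⦄, u ∈ A x → v ∈ A y → x ≠ y → 0 < ⟪x - y, u - v⟫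

/-- Strict monotonicity is dominant w.r.t. the resolvent average. -/
theorem stmt12 {n : ℕ} (hn : 0 < n) {μ : ℝ} (hμ : 0 < μ) (lam : Fin n → ℝ)
    (hpos : ∀ i, 0 < lam i) (hsum : ∑ i, lam i = 1) (A : Fin n → H → Set H)
    (hA : ∀ i, SVP.IsMaxMonotone (A i))
    (hstrict : ∃ i₀, IsStrictlyMonotone (A i₀)) :
    IsStrictlyMonotone (SVP.resAvg μ lam A) := by
  obtain ⟨i₀, hst⟩ := hstrict
  intro x y u v hu hv hxy
  simp only [SVP.resAvg, SVP.sub, SVP.inv, SVP.lcomb, SVP.add, SVP.smul, SVP.id',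
    Set.mem_setOf_eq, Set.image_singleton, Set.mem_singleton_iff] at hu hv
  obtain ⟨w, ⟨p, hp, hx⟩, s, hs, hu⟩ := hu
  obtain ⟨z, ⟨q, hq, hy⟩, t, ht, hv⟩ := hv
  subst hs ht hu hv
  have ha : ∀ i, w - μ⁻¹ • p i ∈ A i (p i) := by
    intro i
    obtain ⟨a, haA, t', ht', hw⟩ := hp i
    have : a = w - μ⁻¹ • p i := by rw [hw, ht']; abel
    rwa [this] at haA
  have hb : ∀ i, z - μ⁻¹ • q i ∈ A i (q i) := by
    intro i
    obtain ⟨a, haA, t', ht', hz⟩ := hq i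
    have : a = z - μ⁻¹ • q i := by rw [hz, ht']; abel
    rwa [this] at haA
  set d : Fin n → H := fun i => p i - q i with hd
  have hm : x - y = ∑ i, lam i • d i := by
    rw [hx, hy, ← Finset.sum_sub_distrib]
    simp [hd, smul_sub]
  -- rewrite monotonicity data
  have hdiff : ∀ i, (w - μ⁻¹ • p i) - (z - μ⁻¹ • q i) = (w - z) - μ⁻¹ • d i := by
    intro i; simp only [hd, smul_sub]; abel
  have hmono : ∀ i, 0 ≤ ⟪d i, w - z⟫ - μ⁻¹ * ⟪d i, d i⟫ := by
    intro i
    have h0 := (hA i).1 (ha i) (hb i)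
    rwa [hdiff i, inner_sub_right, real_inner_smul_right] at h0
  have hsum_inner : ∀ c : H, ∑ i, lam i * ⟪d i, c⟫ = ⟪x - y, c⟫ := by
    intro c
    rw [hm, sum_inner]
    simp [real_inner_smul_left]
  set g : Fin n → ℝ := fun i =>
    lam i * ((⟪d i, w - z⟫ - μ⁻¹ * ⟪d i, d i⟫) + μ⁻¹ * ⟪d i - (x - y), d i - (x - y)⟫) with hg
  have hgeq : ∀ i, g i = lam i * ⟪d i, w - z⟫ - 2 * μ⁻¹ * (lam i * ⟪d i, x - y⟫)
      + μ⁻¹ * (lam i * ⟪x - y, x - y⟫) := by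
    intro i
    simp only [hg, real_inner_sub_sub_self]
    ring
  have key : ⟪x - y, w - z⟫ - μ⁻¹ * ⟪x - y, x - y⟫ = ∑ i, g i := by
    simp only [hgeq]
    rw [Finset.sum_add_distrib, Finset.sum_sub_distrib, hsum_inner, ← Finset.mul_sum,
      hsum_inner, ← Finset.mul_sum, ← Finset.sum_mul, hsum]
    ring
  have goal_eq : ⟪x - y, (w - μ⁻¹ • x) - (z - μ⁻¹ • y)⟫
      = ⟪x - y, w - z⟫ - μ⁻¹ * ⟪x - y, x - y⟫ := by
    have h1 : (w - μ⁻¹ • x) - (z - μ⁻¹ • y) = (w - z) - μ⁻¹ • (x - y) := by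
      rw [smul_sub]; abel
    rw [h1, inner_sub_right, real_inner_smul_right]
  rw [goal_eq, key]
  have hnonneg : ∀ i ∈ Finset.univ, 0 ≤ g i := by
    intro i _
    apply mul_nonneg (hpos i).le
    have h2 : 0 ≤ μ⁻¹ * ⟪d i - (x - y), d i - (x - y)⟫ :=
      mul_nonneg (inv_nonneg.2 hμ.le) real_inner_self_nonneg
    linarith [hmono i]
  apply Finset.sum_pos' hnonneg
  by_cases hall : ∀ i, d i = x - y
  · refine ⟨i₀, Finset.mem_univ _, ?_⟩
    have hdne : p i₀ ≠ q i₀ := by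
      intro h
      have : d i₀ = 0 := by simp [hd, h]
      rw [hall i₀] at this
      exact hxy (sub_eq_zero.1 this)
    have hpos' := hst (ha i₀) (hb i₀) hdne
    rw [hdiff i₀, inner_sub_right, real_inner_smul_right] at hpos'
    apply mul_pos (hpos i₀)
    have h2 : 0 ≤ μ⁻¹ * ⟪d i₀ - (x - y), d i₀ - (x - y)⟫ :=
      mul_nonneg (inv_nonneg.2 hμ.le) real_inner_self_nonneg
    linarith
  · push_neg at hall
    obtain ⟨j, hj⟩ := hall
    refine ⟨j, Finset.mem_univ _, ?_⟩
    apply mul_pos (hpos j)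
    have h2 : 0 < ⟪d j - (x - y), d j - (x - y)⟫ := by
      rw [real_inner_self_eq_norm_sq]
      exact pow_pos (norm_pos_iff.2 (sub_ne_zero.2 hj)) 2
    have := hmono j
    have h3 : 0 < μ⁻¹ * ⟪d j - (x - y), d j - (x - y)⟫ :=
      mul_pos (inv_pos.2 hμ) h2
    linarith
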